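/- In the general noisy-response setting, let Θ ⊆ ℝ^d, let f : Θ → (E → {0,1}) assign to each θ a measurable classifier f_θ, and define for each noise level τ > 0 the performative risk PR_τ(θ) = ∫ 1{y ≠ f_θ(x)} dD_τ(θ)(x,y). Let σ, σ̃ > 0, let θ̂ ∈ Θ be a minimizer of PR_{σ̃} over Θ, and let θ* ∈ Θ be a minimizer of PR_σ over Θ. Then PR_σ(θ̂) − PR_σ(θ*) ≤ √(|σ² − σ̃²|·d / min(σ², σ̃²)). (An error in estimating the noise parameter of noisy response translates into a controlled excess performative risk.) -/

import Mathlib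

open MeasureTheory ProbabilityTheory Real
open scoped NNReal ENNReal

namespace Stmt15Aux


lemma sqrt_gauss_mul {a b : ℝ≥0} (ha : a ≠ 0) (hb : b ≠ 0) (x : ℝ) :
    Real.sqrt (gaussianPDFReal 0 a x * gaussianPDFReal 0 b x)
      = Real.sqrt (2 * Real.sqrt ((a:ℝ) * b) / (a + b))
        * gaussianPDFReal 0 (a * b * 2 / (a + b)) x := by
  have ha' : (0:ℝ) < a := lt_of_le_of_ne a.coe_nonneg (by exact_mod_cast ha.symm)
  have hb' : (0:ℝ) < b := lt_of_le_of_ne b.coe_nonneg (by exact_mod_cast hb.symm)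
  have hab : (0:ℝ) < (a:ℝ) + b := by positivity
  set w : ℝ≥0 := a * b * 2 / (a + b) with hw
  have hwc : (w:ℝ) = (a:ℝ) * b * 2 / ((a:ℝ) + b) := by
    rw [hw]
    push_cast [NNReal.coe_div]
    ring
  have hw' : (0:ℝ) < (w:ℝ) := by rw [hwc]; positivity
  have hrhs_nonneg : 0 ≤ Real.sqrt (2 * Real.sqrt ((a:ℝ) * b) / (a + b))
      * gaussianPDFReal 0 w x := by
    have := gaussianPDFReal_nonneg 0 w x
    positivity
  rw [show gaussianPDFReal 0 a x * gaussianPDFReal 0 b x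
      = (Real.sqrt (2 * Real.sqrt ((a:ℝ) * b) / (a + b)) * gaussianPDFReal 0 w x) ^ 2 from ?_,
    Real.sqrt_sq hrhs_nonneg]
  have s := Real.sqrt ((a:ℝ) * b)
  set s : ℝ := Real.sqrt ((a:ℝ) * b) with hs
  have hs2 : s ^ 2 = (a:ℝ) * b := Real.sq_sqrt (by positivity)
  have hspos : 0 < s := Real.sqrt_pos.mpr (by positivity)
  have hβ : (Real.sqrt (2 * s / (a + b))) ^ 2 = 2 * s / (a + b) :=
    Real.sq_sqrt (by positivity)
  simp only [gaussianPDFReal, sub_zero]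
  rw [mul_pow, hβ, mul_pow, ← Real.exp_nat_mul]
  have hsqa : Real.sqrt (2 * π * a) * Real.sqrt (2 * π * b) = 2 * π * s := by
    rw [← Real.sqrt_mul (by positivity), hs]
    rw [show 2 * π * (a:ℝ) * (2 * π * b) = (2*π)^2 * ((a:ℝ)*b) by ring,
      Real.sqrt_mul (by positivity), Real.sqrt_sq (by positivity)]
  have hsqw : (Real.sqrt (2 * π * w))⁻¹ ^ 2 = (2 * π * (w:ℝ))⁻¹ := by
    rw [inv_pow, Real.sq_sqrt (by positivity)]
  rw [hsqw]
  have hexp : Real.exp (-x ^ 2 / (2 * a)) * Real.exp (-x ^ 2 / (2 * b))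
      = Real.exp ((2:ℕ) * (-x ^ 2 / (2 * w))) := by
    rw [← Real.exp_add]
    congr 1
    rw [hwc]
    field_simp
    ring
  have hcoef : (2*π*s)⁻¹ = 2*s/((a:ℝ)+b) * (2*π*(w:ℝ))⁻¹ := by
    rw [hwc]
    have hπ := Real.pi_pos
    field_simp
    nlinarith [hs2, hspos, hπ]
  rw [mul_mul_mul_comm, ← mul_inv, hsqa, hexp, hcoef]
  ring



lemma indicator_pi_prod {d : ℕ} (s : Fin d → Set ℝ) (h : Fin d → ℝ → ℝ) (x : Fin d → ℝ) :
    Set.indicator (Set.univ.pi s) (fun x => ∏ i, h i (x i)) x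
      = ∏ i, Set.indicator (s i) (h i) (x i) := by
  by_cases hx : x ∈ Set.univ.pi s
  · rw [Set.indicator_of_mem hx]
    refine Finset.prod_congr rfl fun i _ => ?_
    rw [Set.indicator_of_mem (hx i (Set.mem_univ i))]
  · rw [Set.indicator_of_notMem hx]
    rw [Set.mem_pi] at hx
    push_neg at hx
    obtain ⟨i, _, hi⟩ := hx
    exact (Finset.prod_eq_zero (Finset.mem_univ i) (Set.indicator_of_notMem hi _)).symm

lemma pi_gauss_withDensity {d : ℕ} {v : ℝ≥0} (hv : v ≠ 0) :
    (Measure.pi fun _ : Fin d => gaussianReal 0 v)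
      = (volume : Measure (Fin d → ℝ)).withDensity
          (fun x => ENNReal.ofReal (∏ i, gaussianPDFReal 0 v (x i))) := by
  refine Measure.pi_eq fun s hs => ?_
  have hmeas : MeasurableSet (Set.univ.pi s) := MeasurableSet.univ_pi hs
  rw [withDensity_apply _ hmeas]
  have hint : Integrable (fun x : Fin d → ℝ => ∏ i, gaussianPDFReal 0 v (x i)) :=
    Integrable.fintype_prod (fun _ => integrable_gaussianPDFReal 0 v)
  have hnn : 0 ≤ᵐ[volume.restrict (Set.univ.pi s)]
      (fun x : Fin d → ℝ => ∏ i, gaussianPDFReal 0 v (x i)) :=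
    Filter.Eventually.of_forall fun x =>
      Finset.prod_nonneg fun i _ => gaussianPDFReal_nonneg 0 v (x i)
  rw [← ofReal_integral_eq_lintegral_ofReal (hint.restrict) hnn,
    ← integral_indicator hmeas]
  have : ∀ x, Set.indicator (Set.univ.pi s) (fun x : Fin d → ℝ =>
      ∏ i, gaussianPDFReal 0 v (x i)) x
      = ∏ i, Set.indicator (s i) (gaussianPDFReal 0 v) (x i) :=
    indicator_pi_prod s (fun _ => gaussianPDFReal 0 v)
  rw [integral_congr_ae (Filter.Eventually.of_forall this)]
  rw [MeasureTheory.integral_fintype_prod_volume_eq_prod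
    (fun _ => Set.indicator _ (gaussianPDFReal 0 v))]
  rw [ENNReal.ofReal_prod_of_nonneg]
  · refine Finset.prod_congr rfl fun i _ => ?_
    rw [integral_indicator (hs i), gaussianReal_apply_eq_integral 0 hv]
  · intro i _
    rw [integral_indicator (hs i)]
    exact setIntegral_nonneg (hs i) fun x _ => gaussianPDFReal_nonneg 0 v x

lemma pi_gauss_apply_toReal {d : ℕ} {v : ℝ≥0} (hv : v ≠ 0) {S : Set (Fin d → ℝ)}
    (hS : MeasurableSet S) :
    ((Measure.pi fun _ : Fin d => gaussianReal 0 v) S).toReal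
      = ∫ x in S, ∏ i, gaussianPDFReal 0 v (x i) := by
  have hint : Integrable (fun x : Fin d → ℝ => ∏ i, gaussianPDFReal 0 v (x i)) :=
    Integrable.fintype_prod (fun _ => integrable_gaussianPDFReal 0 v)
  have hnn : 0 ≤ᵐ[volume.restrict S]
      (fun x : Fin d → ℝ => ∏ i, gaussianPDFReal 0 v (x i)) :=
    Filter.Eventually.of_forall fun x =>
      Finset.prod_nonneg fun i _ => gaussianPDFReal_nonneg 0 v (x i)
  rw [pi_gauss_withDensity hv, withDensity_apply _ hS,
    ← ofReal_integral_eq_lintegral_ofReal (hint.restrict) hnn,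
    ENNReal.toReal_ofReal]
  exact setIntegral_nonneg hS fun x _ =>
    Finset.prod_nonneg fun i _ => gaussianPDFReal_nonneg 0 v (x i)

lemma tv_bound {d : ℕ} {a b : ℝ≥0} (ha : a ≠ 0) (hb : b ≠ 0) {S : Set (Fin d → ℝ)}
    (hS : MeasurableSet S) :
    |((Measure.pi fun _ : Fin d => gaussianReal 0 a) S).toReal
      - ((Measure.pi fun _ : Fin d => gaussianReal 0 b) S).toReal|
      ≤ Real.sqrt (1 - (2 * Real.sqrt ((a:ℝ) * b) / ((a:ℝ) + b)) ^ d) := by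
  have ha' : (0:ℝ) < a := lt_of_le_of_ne a.coe_nonneg (by exact_mod_cast ha.symm)
  have hb' : (0:ℝ) < b := lt_of_le_of_ne b.coe_nonneg (by exact_mod_cast hb.symm)
  set r : ℝ := 2 * Real.sqrt ((a:ℝ) * b) / ((a:ℝ) + b) with hr
  have hr_nonneg : 0 ≤ r := by positivity
  have hr_le_one : r ≤ 1 := by
    rw [hr, div_le_one (by positivity)]
    nlinarith [sq_nonneg (Real.sqrt (a:ℝ) - Real.sqrt (b:ℝ)), Real.sq_sqrt ha'.le,
      Real.sq_sqrt hb'.le, Real.sqrt_mul ha'.le (b:ℝ),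
      Real.sqrt_nonneg ((a:ℝ)), Real.sqrt_nonneg ((b:ℝ))]
  set β : ℝ := Real.sqrt r with hβdef
  have hβ_nonneg : 0 ≤ β := Real.sqrt_nonneg r
  have hβsq : β ^ 2 = r := Real.sq_sqrt hr_nonneg
  have hβ_le_one : β ≤ 1 := by
    rw [hβdef, show (1:ℝ) = Real.sqrt 1 by simp]
    exact Real.sqrt_le_sqrt hr_le_one
  set w : ℝ≥0 := a * b * 2 / (a + b) with hw
  have hw0 : w ≠ 0 := by
    rw [hw]
    have : a * b * 2 ≠ 0 := by
      simp [ha, hb]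
    simp [div_eq_zero_iff, this, ha, hb]
  set pa := gaussianPDFReal 0 a with hpa
  set pb := gaussianPDFReal 0 b with hpb
  set pw := gaussianPDFReal 0 w with hpw
  have hkey : ∀ x : ℝ, Real.sqrt (pa x) * Real.sqrt (pb x) = β * pw x := by
    intro x
    rw [← Real.sqrt_mul (gaussianPDFReal_nonneg 0 a x)]
    exact sqrt_gauss_mul ha hb x
  set ga : (Fin d → ℝ) → ℝ := fun x => ∏ i, pa (x i) with hga
  set gb : (Fin d → ℝ) → ℝ := fun x => ∏ i, pb (x i) with hgb
  set gw : (Fin d → ℝ) → ℝ := fun x => ∏ i, pw (x i) with hgw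
  set sa : (Fin d → ℝ) → ℝ := fun x => ∏ i, Real.sqrt (pa (x i)) with hsa
  set sb : (Fin d → ℝ) → ℝ := fun x => ∏ i, Real.sqrt (pb (x i)) with hsb
  have hsa_nonneg : ∀ x, 0 ≤ sa x := fun x =>
    Finset.prod_nonneg fun i _ => Real.sqrt_nonneg _
  have hsb_nonneg : ∀ x, 0 ≤ sb x := fun x =>
    Finset.prod_nonneg fun i _ => Real.sqrt_nonneg _
  have hsa_sq : ∀ x, sa x ^ 2 = ga x := by
    intro x
    rw [hsa, ← Finset.prod_pow]
    exact Finset.prod_congr rfl fun i _ => Real.sq_sqrt (gaussianPDFReal_nonneg 0 a _)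
  have hsb_sq : ∀ x, sb x ^ 2 = gb x := by
    intro x
    rw [hsb, ← Finset.prod_pow]
    exact Finset.prod_congr rfl fun i _ => Real.sq_sqrt (gaussianPDFReal_nonneg 0 b _)
  have hsasb : ∀ x, sa x * sb x = β ^ d * gw x := by
    intro x
    rw [hsa, hsb, ← Finset.prod_mul_distrib]
    calc (∏ i, Real.sqrt (pa (x i)) * Real.sqrt (pb (x i)))
        = ∏ i, (β * pw (x i)) := Finset.prod_congr rfl fun i _ => hkey _
      _ = β ^ d * gw x := by
          rw [Finset.prod_mul_distrib, Finset.prod_const, Finset.card_univ, Fintype.card_fin]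
  -- integrability
  have int_ga : Integrable ga := Integrable.fintype_prod (fun _ => integrable_gaussianPDFReal 0 a)
  have int_gb : Integrable gb := Integrable.fintype_prod (fun _ => integrable_gaussianPDFReal 0 b)
  have int_gw : Integrable gw := Integrable.fintype_prod (fun _ => integrable_gaussianPDFReal 0 w)
  have int_sasb : Integrable (fun x => sa x * sb x) := by
    simp only [hsasb]
    exact int_gw.const_mul _
  have hm_sa : Measurable sa :=
    Finset.measurable_prod _ fun i _ =>
      Real.continuous_sqrt.measurable.comp ((measurable_gaussianPDFReal 0 a).comp
        (measurable_pi_apply i))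
  have hm_sb : Measurable sb :=
    Finset.measurable_prod _ fun i _ =>
      Real.continuous_sqrt.measurable.comp ((measurable_gaussianPDFReal 0 b).comp
        (measurable_pi_apply i))
  have hu_sq : ∀ x, (sa x - sb x) ^ 2 = ga x + gb x - 2 * (sa x * sb x) := by
    intro x
    have h1 := hsa_sq x
    have h2 := hsb_sq x
    nlinarith [h1, h2]
  have hv_sq : ∀ x, (sa x + sb x) ^ 2 = ga x + gb x + 2 * (sa x * sb x) := by
    intro x
    have h1 := hsa_sq x
    have h2 := hsb_sq x
    nlinarith [h1, h2]
  have int_usq : Integrable (fun x => (sa x - sb x) ^ 2) := by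
    simp only [hu_sq]
    exact (int_ga.add int_gb).sub (int_sasb.const_mul 2)
  have int_vsq : Integrable (fun x => (sa x + sb x) ^ 2) := by
    simp only [hv_sq]
    exact (int_ga.add int_gb).add (int_sasb.const_mul 2)
  -- integrals
  have i_ga : ∫ x, ga x = 1 := by
    rw [hga, MeasureTheory.integral_fintype_prod_volume_eq_prod (fun _ => pa)]
    simp [hpa, integral_gaussianPDFReal_eq_one 0 ha]
  have i_gb : ∫ x, gb x = 1 := by
    rw [hgb, MeasureTheory.integral_fintype_prod_volume_eq_prod (fun _ => pb)]
    simp [hpb, integral_gaussianPDFReal_eq_one 0 hb]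
  have i_gw : ∫ x, gw x = 1 := by
    rw [hgw, MeasureTheory.integral_fintype_prod_volume_eq_prod (fun _ => pw)]
    simp [hpw, integral_gaussianPDFReal_eq_one 0 hw0]
  have i_sasb : ∫ x, sa x * sb x = β ^ d := by
    simp only [hsasb]
    rw [integral_const_mul, i_gw, mul_one]
  have i_usq : ∫ x, (sa x - sb x) ^ 2 = 2 - 2 * β ^ d := by
    simp only [hu_sq]
    have h1 : Integrable (fun x => ga x + gb x) := int_ga.add int_gb
    have h2 : Integrable (fun x => 2 * (sa x * sb x)) := int_sasb.const_mul 2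
    rw [integral_sub h1 h2, integral_add int_ga int_gb, integral_const_mul, i_ga, i_gb, i_sasb]
    ring
  have i_vsq : ∫ x, (sa x + sb x) ^ 2 = 2 + 2 * β ^ d := by
    simp only [hv_sq]
    have h1 : Integrable (fun x => ga x + gb x) := int_ga.add int_gb
    have h2 : Integrable (fun x => 2 * (sa x * sb x)) := int_sasb.const_mul 2
    rw [integral_add h1 h2, integral_add int_ga int_gb, integral_const_mul, i_ga, i_gb, i_sasb]
    ring
  -- Cauchy-Schwarz
  have habs : ∀ x, |ga x - gb x| = |sa x - sb x| * (sa x + sb x) := by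
    intro x
    rw [← hsa_sq, ← hsb_sq, show sa x ^ 2 - sb x ^ 2 = (sa x - sb x) * (sa x + sb x) by ring,
      abs_mul, abs_of_nonneg (add_nonneg (hsa_nonneg x) (hsb_nonneg x))]
  have hc : β ^ d ≤ 1 := pow_le_one₀ hβ_nonneg hβ_le_one
  have hc0 : 0 ≤ β ^ d := pow_nonneg hβ_nonneg d
  have hCS : ∫ x, |ga x - gb x| ≤ 2 * Real.sqrt (1 - (β ^ d) ^ 2) := by
    have hpq : Real.HolderConjugate 2 2 := Real.holderConjugate_iff.mpr ⟨one_lt_two, by norm_num⟩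
    have hmem1 : MemLp (fun x => |sa x - sb x|) (ENNReal.ofReal 2) volume := by
      rw [show ENNReal.ofReal 2 = 2 by norm_num]
      refine (memLp_two_iff_integrable_sq ((hm_sa.sub hm_sb).abs).aestronglyMeasurable).mpr ?_
      simpa [sq_abs] using int_usq
    have hmem2 : MemLp (fun x => sa x + sb x) (ENNReal.ofReal 2) volume := by
      rw [show ENNReal.ofReal 2 = 2 by norm_num]
      exact (memLp_two_iff_integrable_sq (hm_sa.add hm_sb).aestronglyMeasurable).mpr int_vsq
    have hH := MeasureTheory.integral_mul_le_Lp_mul_Lq_of_nonneg hpq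
      (Filter.Eventually.of_forall fun x => abs_nonneg (sa x - sb x))
      (Filter.Eventually.of_forall fun x => add_nonneg (hsa_nonneg x) (hsb_nonneg x))
      hmem1 hmem2
    have hrw1 : ∀ x : Fin d → ℝ, |sa x - sb x| ^ (2:ℝ) = (sa x - sb x) ^ 2 := by
      intro x
      rw [show (2:ℝ) = ((2:ℕ):ℝ) by norm_num, Real.rpow_natCast, sq_abs]
    have hrw2 : ∀ x : Fin d → ℝ, (sa x + sb x) ^ (2:ℝ) = (sa x + sb x) ^ 2 := by
      intro x
      rw [show (2:ℝ) = ((2:ℕ):ℝ) by norm_num, Real.rpow_natCast]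
    simp only [hrw1, hrw2] at hH
    rw [i_usq, i_vsq] at hH
    calc ∫ x, |ga x - gb x| = ∫ x, |sa x - sb x| * (sa x + sb x) := by simp only [habs]
      _ ≤ (2 - 2 * β ^ d) ^ ((1:ℝ)/2) * (2 + 2 * β ^ d) ^ ((1:ℝ)/2) := hH
      _ = Real.sqrt ((2 - 2 * β ^ d) * (2 + 2 * β ^ d)) := by
          rw [← Real.sqrt_eq_rpow, ← Real.sqrt_eq_rpow,
            ← Real.sqrt_mul (by linarith : (0:ℝ) ≤ 2 - 2 * β ^ d)]
      _ = 2 * Real.sqrt (1 - (β ^ d) ^ 2) := by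
          rw [show (2 - 2 * β ^ d) * (2 + 2 * β ^ d) = 4 * (1 - (β ^ d) ^ 2) by ring,
            Real.sqrt_mul (by norm_num : (0:ℝ) ≤ 4),
            show Real.sqrt 4 = 2 by
              rw [show (4:ℝ) = 2 ^ 2 by norm_num, Real.sqrt_sq (by norm_num : (0:ℝ) ≤ 2)]]
  -- half-TV
  set φ : (Fin d → ℝ) → ℝ := fun x => ga x - gb x with hφ
  have int_φ : Integrable φ := int_ga.sub int_gb
  have h0 : ∫ x, φ x = 0 := by
    rw [hφ]
    rw [integral_sub int_ga int_gb, i_ga, i_gb, sub_self]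
  have hsplit : (∫ x in S, φ x) + ∫ x in Sᶜ, φ x = 0 := by
    rw [integral_add_compl hS int_φ, h0]
  have habs1 : |∫ x in S, φ x| ≤ ∫ x in S, |φ x| := by
    simpa [Real.norm_eq_abs] using
      norm_integral_le_integral_norm (μ := volume.restrict S) φ
  have habs2 : |∫ x in Sᶜ, φ x| ≤ ∫ x in Sᶜ, |φ x| := by
    simpa [Real.norm_eq_abs] using
      norm_integral_le_integral_norm (μ := volume.restrict Sᶜ) φ
  have hsum : (∫ x in S, |φ x|) + ∫ x in Sᶜ, |φ x| = ∫ x, |φ x| :=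
    integral_add_compl hS int_φ.abs
  have hhalf : |∫ x in S, φ x| ≤ (∫ x, |φ x|) / 2 := by
    have : |∫ x in Sᶜ, φ x| = |∫ x in S, φ x| := by
      rw [show ∫ x in Sᶜ, φ x = -∫ x in S, φ x by linarith, abs_neg]
    linarith [habs1, habs2, hsum.symm.le, hsum.le]
  have hdiff : ((Measure.pi fun _ : Fin d => gaussianReal 0 a) S).toReal
      - ((Measure.pi fun _ : Fin d => gaussianReal 0 b) S).toReal = ∫ x in S, φ x := by
    rw [pi_gauss_apply_toReal ha hS, pi_gauss_apply_toReal hb hS, hφ,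
      integral_sub int_ga.restrict int_gb.restrict]
  rw [hdiff]
  have hrd : (β ^ d) ^ 2 = r ^ d := by
    rw [← pow_mul, mul_comm d 2, pow_mul, hβsq]
  calc |∫ x in S, φ x| ≤ (∫ x, |φ x|) / 2 := hhalf
    _ ≤ 2 * Real.sqrt (1 - (β ^ d) ^ 2) / 2 := by
        have := hCS
        simp only [hφ]
        linarith
    _ = Real.sqrt (1 - r ^ d) := by rw [hrd]; ring

lemma prod_tv {E : Type*} [MeasurableSpace E] {d : ℕ} (DB : Measure (E × Bool))
    [IsProbabilityMeasure DB] {a b : ℝ≥0} (ha : a ≠ 0) (hb : b ≠ 0)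
    {T : Set ((E × Bool) × (Fin d → ℝ))} (hT : MeasurableSet T) :
    |((DB.prod (Measure.pi fun _ : Fin d => gaussianReal 0 a)) T).toReal
      - ((DB.prod (Measure.pi fun _ : Fin d => gaussianReal 0 b)) T).toReal|
      ≤ Real.sqrt (1 - (2 * Real.sqrt ((a:ℝ) * b) / ((a:ℝ) + b)) ^ d) := by
  set γa := (Measure.pi fun _ : Fin d => gaussianReal 0 a) with hγa
  set γb := (Measure.pi fun _ : Fin d => gaussianReal 0 b) with hγb
  set t₀ := Real.sqrt (1 - (2 * Real.sqrt ((a:ℝ) * b) / ((a:ℝ) + b)) ^ d) with ht₀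
  have ht₀_nonneg : 0 ≤ t₀ := Real.sqrt_nonneg _
  set F : E × Bool → ℝ := fun x => (γa (Prod.mk x ⁻¹' T)).toReal with hF
  set G : E × Bool → ℝ := fun x => (γb (Prod.mk x ⁻¹' T)).toReal with hG
  have hFmeas : Measurable F := (measurable_measure_prodMk_left hT).ennreal_toReal
  have hGmeas : Measurable G := (measurable_measure_prodMk_left hT).ennreal_toReal
  have hFbd : ∀ x, 0 ≤ F x ∧ F x ≤ 1 := fun x =>
    ⟨ENNReal.toReal_nonneg, by
      rw [hF]
      exact ENNReal.toReal_le_of_le_ofReal zero_le_one (by simpa using prob_le_one)⟩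
  have hGbd : ∀ x, 0 ≤ G x ∧ G x ≤ 1 := fun x =>
    ⟨ENNReal.toReal_nonneg, by
      rw [hG]
      exact ENNReal.toReal_le_of_le_ofReal zero_le_one (by simpa using prob_le_one)⟩
  have hFint : Integrable F DB := by
    refine Integrable.mono' (integrable_const 1) hFmeas.aestronglyMeasurable ?_
    exact Filter.Eventually.of_forall fun x => by
      rw [Real.norm_eq_abs, abs_of_nonneg (hFbd x).1]; exact (hFbd x).2
  have hGint : Integrable G DB := by
    refine Integrable.mono' (integrable_const 1) hGmeas.aestronglyMeasurable ?_
    exact Filter.Eventually.of_forall fun x => by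
      rw [Real.norm_eq_abs, abs_of_nonneg (hGbd x).1]; exact (hGbd x).2
  have hprodA : ((DB.prod γa) T).toReal = ∫ x, F x ∂DB := by
    rw [Measure.prod_apply hT, ← integral_toReal (measurable_measure_prodMk_left hT).aemeasurable
      (Filter.Eventually.of_forall fun x => measure_lt_top γa _)]
  have hprodB : ((DB.prod γb) T).toReal = ∫ x, G x ∂DB := by
    rw [Measure.prod_apply hT, ← integral_toReal (measurable_measure_prodMk_left hT).aemeasurable
      (Filter.Eventually.of_forall fun x => measure_lt_top γb _)]
  rw [hprodA, hprodB, ← integral_sub hFint hGint]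
  have h1 : |∫ x, (F x - G x) ∂DB| ≤ ∫ x, |F x - G x| ∂DB := by
    simpa [Real.norm_eq_abs] using norm_integral_le_integral_norm (μ := DB) fun x => F x - G x
  refine h1.trans ?_
  have h2 : ∀ x, |F x - G x| ≤ t₀ := fun x =>
    tv_bound ha hb (measurable_prodMk_left hT)
  calc ∫ x, |F x - G x| ∂DB ≤ ∫ _x, t₀ ∂DB :=
        integral_mono (hFint.sub hGint).abs (integrable_const t₀) h2
    _ = t₀ := by simp
  
lemma one_sub_pow_le_nat_mul {r : ℝ} (h0 : 0 ≤ r) (d : ℕ) : 1 - r ^ d ≤ d * (1 - r) := by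
  have h := one_add_mul_le_pow (a := r - 1) (by linarith) d
  have : 1 + (d:ℝ) * (r - 1) ≤ r ^ d := by simpa using h
  nlinarith [this]

lemma alg_bound {σ σt : ℝ} (hσ : 0 < σ) (hσt : 0 < σt) (d : ℕ) :
    2 * Real.sqrt (1 - (2 * (σ * σt) / (σ ^ 2 + σt ^ 2)) ^ d)
      ≤ Real.sqrt (|σ ^ 2 - σt ^ 2| * d / min (σ ^ 2) (σt ^ 2)) := by
  set r : ℝ := 2 * (σ * σt) / (σ ^ 2 + σt ^ 2) with hr
  have hr0 : 0 ≤ r := by positivity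
  have hr1 : r ≤ 1 := by
    rw [hr, div_le_one (by positivity)]
    nlinarith [sq_nonneg (σ - σt)]
  have hkey : 4 * (1 - r) ≤ |σ ^ 2 - σt ^ 2| / min (σ ^ 2) (σt ^ 2) := by
    rcases le_total σt σ with h | h
    · rw [abs_of_nonneg (by nlinarith : (0:ℝ) ≤ σ ^ 2 - σt ^ 2),
        min_eq_right (by nlinarith : σt ^ 2 ≤ σ ^ 2), hr]
      have h2 : 4 * (1 - 2 * (σ * σt) / (σ ^ 2 + σt ^ 2))
          = 4 * (σ - σt) ^ 2 / (σ ^ 2 + σt ^ 2) := by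
        field_simp
        ring
      rw [h2, div_le_div_iff₀ (by positivity) (by positivity)]
      nlinarith [mul_nonneg (mul_nonneg (sub_nonneg.mpr h) (sq_nonneg (σ - σt)))
          (by positivity : (0:ℝ) ≤ σ + 3 * σt),
        mul_nonneg (sub_nonneg.mpr h) (by positivity : (0:ℝ) ≤ 2 * σ * σt ^ 2 + 2 * σt ^ 3)]
    · rw [abs_of_nonpos (by nlinarith : σ ^ 2 - σt ^ 2 ≤ (0:ℝ)),
        min_eq_left (by nlinarith : σ ^ 2 ≤ σt ^ 2), hr]
      have h2 : 4 * (1 - 2 * (σ * σt) / (σ ^ 2 + σt ^ 2))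
          = 4 * (σt - σ) ^ 2 / (σ ^ 2 + σt ^ 2) := by
        field_simp
        ring
      rw [h2, div_le_div_iff₀ (by positivity) (by positivity)]
      nlinarith [mul_nonneg (mul_nonneg (sub_nonneg.mpr h) (sq_nonneg (σt - σ)))
          (by positivity : (0:ℝ) ≤ σt + 3 * σ),
        mul_nonneg (sub_nonneg.mpr h) (by positivity : (0:ℝ) ≤ 2 * σt * σ ^ 2 + 2 * σ ^ 3)]
  have h4 : 4 * (1 - r ^ d) ≤ |σ ^ 2 - σt ^ 2| * d / min (σ ^ 2) (σt ^ 2) := by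
    have hb := one_sub_pow_le_nat_mul hr0 d
    have : 4 * (1 - r ^ d) ≤ (d:ℝ) * (4 * (1 - r)) := by nlinarith [hb]
    refine this.trans ?_
    calc (d:ℝ) * (4 * (1 - r)) ≤ (d:ℝ) * (|σ ^ 2 - σt ^ 2| / min (σ ^ 2) (σt ^ 2)) := by
          exact mul_le_mul_of_nonneg_left hkey (Nat.cast_nonneg d)
      _ = |σ ^ 2 - σt ^ 2| * d / min (σ ^ 2) (σt ^ 2) := by ring
  calc 2 * Real.sqrt (1 - r ^ d) = Real.sqrt (4 * (1 - r ^ d)) := by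
        rw [Real.sqrt_mul (by norm_num : (0:ℝ) ≤ 4),
          show Real.sqrt 4 = 2 by
            rw [show (4:ℝ) = 2 ^ 2 by norm_num, Real.sqrt_sq (by norm_num : (0:ℝ) ≤ 2)]]
    _ ≤ _ := Real.sqrt_le_sqrt h4


end Stmt15Aux

open Stmt15Aux

/-- The general noisy-response distribution map: the pushforward of the base distribution
tensored with Gaussian perception noise N(0, σ²I_d) under ((x,y),ξ) ↦ (ρ(x, θ+ξ), y). -/
noncomputable def noisyMapGen {E : Type*} [MeasurableSpace E] {d : ℕ}
    (DB : Measure (E × Bool)) (ρ : E → (Fin d → ℝ) → E) (σ : ℝ) (θ : Fin d → ℝ) :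
    Measure (E × Bool) :=
  Measure.map (fun q : (E × Bool) × (Fin d → ℝ) => (ρ q.1.1 (θ + q.2), q.1.2))
    (DB.prod (Measure.pi fun _ : Fin d => gaussianReal 0 ⟨σ ^ 2, sq_nonneg σ⟩))

/-- Performative risk of the classifier `f θ` under the noisy-response distribution map
with noise level `τ`. -/
noncomputable def noisyPR {E : Type*} [MeasurableSpace E] {d : ℕ}
    (DB : Measure (E × Bool)) (ρ : E → (Fin d → ℝ) → E)
    (f : (Fin d → ℝ) → E → Bool) (τ : ℝ) (θ : Fin d → ℝ) : ℝ :=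
  (noisyMapGen DB ρ τ θ {p : E × Bool | f θ p.1 ≠ p.2}).toReal

/-- Corollary 3 (an error in estimating the noise parameter of noisy
response translates into a controlled excess performative risk). -/
theorem stmt15 {E : Type*} [MeasurableSpace E] {d : ℕ}
    (DB : Measure (E × Bool)) [IsProbabilityMeasure DB]
    (ρ : E → (Fin d → ℝ) → E)
    (hρ : Measurable fun q : E × (Fin d → ℝ) => ρ q.1 q.2)
    (Θ : Set (Fin d → ℝ)) (f : (Fin d → ℝ) → E → Bool)
    (hf : ∀ θ ∈ Θ, Measurable (f θ))
    (σ σt : ℝ) (hσ : 0 < σ) (hσt : 0 < σt)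
    (θhat θstar : Fin d → ℝ) (hθhat : θhat ∈ Θ) (hθstar : θstar ∈ Θ)
    (hmin_hat : ∀ θ ∈ Θ, noisyPR DB ρ f σt θhat ≤ noisyPR DB ρ f σt θ)
    (hmin_star : ∀ θ ∈ Θ, noisyPR DB ρ f σ θstar ≤ noisyPR DB ρ f σ θ) :
    noisyPR DB ρ f σ θhat - noisyPR DB ρ f σ θstar ≤
      Real.sqrt (|σ ^ 2 - σt ^ 2| * d / min (σ ^ 2) (σt ^ 2)) := by
  set va : ℝ≥0 := ⟨σ ^ 2, sq_nonneg σ⟩ with hva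
  set vb : ℝ≥0 := ⟨σt ^ 2, sq_nonneg σt⟩ with hvb
  have hva0 : va ≠ 0 := by
    rw [← NNReal.coe_ne_zero]
    exact (by positivity : (0:ℝ) < σ ^ 2).ne'
  have hvb0 : vb ≠ 0 := by
    rw [← NNReal.coe_ne_zero]
    exact (by positivity : (0:ℝ) < σt ^ 2).ne'
  have hcoe_a : ((va:ℝ)) = σ ^ 2 := rfl
  have hcoe_b : ((vb:ℝ)) = σt ^ 2 := rfl
  have hsqrt_ab : Real.sqrt ((va:ℝ) * (vb:ℝ)) = σ * σt := by
    rw [hcoe_a, hcoe_b, show σ ^ 2 * σt ^ 2 = (σ * σt) ^ 2 by ring,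
      Real.sqrt_sq (by positivity)]
  set t₀ : ℝ := Real.sqrt (1 - (2 * (σ * σt) / (σ ^ 2 + σt ^ 2)) ^ d) with ht₀
  have key : ∀ θ : Fin d → ℝ, θ ∈ Θ →
      |noisyPR DB ρ f σ θ - noisyPR DB ρ f σt θ| ≤ t₀ := by
    intro θ hθ
    have hAm : MeasurableSet {p : E × Bool | f θ p.1 ≠ p.2} := by
      have heq : {p : E × Bool | f θ p.1 ≠ p.2}
          = (fun p : E × Bool => (f θ p.1, p.2)) ⁻¹' {q : Bool × Bool | q.1 ≠ q.2} := rfl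
      rw [heq]
      exact (((hf θ hθ).comp measurable_fst).prodMk measurable_snd)
        ((Set.to_countable _).measurableSet)
    have hm : Measurable (fun q : (E × Bool) × (Fin d → ℝ) => (ρ q.1.1 (θ + q.2), q.1.2)) := by
      refine Measurable.prodMk ?_ (measurable_snd.comp measurable_fst)
      refine hρ.comp (Measurable.prodMk (measurable_fst.comp measurable_fst) ?_)
      exact ((continuous_const.add continuous_id).measurable).comp measurable_snd
    have hT : MeasurableSet ((fun q : (E × Bool) × (Fin d → ℝ) =>
        (ρ q.1.1 (θ + q.2), q.1.2)) ⁻¹' {p : E × Bool | f θ p.1 ≠ p.2}) := hm hAm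
    have h1 : noisyPR DB ρ f σ θ
        = ((DB.prod (Measure.pi fun _ : Fin d => gaussianReal 0 va)) ((fun q : (E × Bool) × (Fin d → ℝ) =>
          (ρ q.1.1 (θ + q.2), q.1.2)) ⁻¹' {p : E × Bool | f θ p.1 ≠ p.2})).toReal := by
      rw [noisyPR, noisyMapGen, Measure.map_apply hm hAm]
    have h2 : noisyPR DB ρ f σt θ
        = ((DB.prod (Measure.pi fun _ : Fin d => gaussianReal 0 vb)) ((fun q : (E × Bool) × (Fin d → ℝ) =>
          (ρ q.1.1 (θ + q.2), q.1.2)) ⁻¹' {p : E × Bool | f θ p.1 ≠ p.2})).toReal := by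
      rw [noisyPR, noisyMapGen, Measure.map_apply hm hAm]
    rw [h1, h2]
    have hbd := prod_tv DB hva0 hvb0 hT
    rw [hsqrt_ab, hcoe_a, hcoe_b] at hbd
    exact hbd
  have hA1 := abs_le.mp (key θhat hθhat)
  have hA2 := abs_le.mp (key θstar hθstar)
  have hmid := hmin_hat θstar hθstar
  have h2t : 2 * t₀ ≤ Real.sqrt (|σ ^ 2 - σt ^ 2| * d / min (σ ^ 2) (σt ^ 2)) := by
    rw [ht₀]
    exact alg_bound hσ hσt d
  linarith [hA1.2, hA2.1]
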